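/- Let {s_k} be a nonnegative real sequence with s_k → 0, let α > 1 and β > 0, and suppose that s_k^α ≤ β(s_k − s_{k+1}) for all sufficiently large k. Then there exists a constant ϱ > 0 such that s_k ≤ ϱ k^{−1/(α−1)} for all sufficiently large k. -/

import Mathlib

open Filter

/-- Bernoulli-type inequality for negative exponents: for `0 < x` and `0 < q`,
`1 + q * (1 - x) ≤ x ^ (-q)`. -/
lemma bern_neg {x q : ℝ} (hx : 0 < x) (hq : 0 < q) :
    1 + q * (1 - x) ≤ x ^ (-q) := by
  rw [Real.rpow_def_of_pos hx]
  have h1 : Real.log x ≤ x - 1 := Real.log_le_sub_one_of_pos hx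
  have h2 : 1 + Real.log x * -q ≤ Real.exp (Real.log x * -q) :=
    Real.add_one_le_exp _ |>.trans_eq' (by ring_nf)
  nlinarith [Real.add_one_le_exp (Real.log x * -q)]

/-- Key step inequality: for `0 < b ≤ a` and `1 < α`,
`a ^ (1-α) + (α-1) * (a-b) / a ^ α ≤ b ^ (1-α)`. -/
lemma key_step {a b α : ℝ} (hb : 0 < b) (hba : b ≤ a) (hα : 1 < α) :
    a ^ (1 - α) + (α - 1) * (a - b) / a ^ α ≤ b ^ (1 - α) := by
  have ha : 0 < a := hb.trans_le hba
  have ht : 0 < b / a := div_pos hb ha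
  have hbern := bern_neg ht (show (0:ℝ) < α - 1 by linarith)
  have hrw : (b / a) ^ (-(α - 1)) = b ^ (1 - α) / a ^ (1 - α) := by
    rw [Real.div_rpow hb.le ha.le]
    ring_nf
  rw [hrw] at hbern
  have haα : (0:ℝ) < a ^ (1 - α) := Real.rpow_pos_of_pos ha _
  have haα' : (0:ℝ) < a ^ α := Real.rpow_pos_of_pos ha _
  -- multiply hbern by a ^ (1 - α)
  have h3 : (1 + (α - 1) * (1 - b / a)) * a ^ (1 - α) ≤ b ^ (1 - α) := by
    have := mul_le_mul_of_nonneg_right hbern haα.le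
    calc (1 + (α - 1) * (1 - b / a)) * a ^ (1 - α)
        ≤ b ^ (1 - α) / a ^ (1 - α) * a ^ (1 - α) := this
      _ = b ^ (1 - α) := by field_simp
  have h1α : a ^ (1 - α) = a / a ^ α := by
    rw [Real.rpow_sub ha, Real.rpow_one]
  have hexp : (1 + (α - 1) * (1 - b / a)) * a ^ (1 - α)
      = a ^ (1 - α) + (α - 1) * (a - b) / a ^ α := by
    rw [h1α]
    field_simp
  linarith [hexp ▸ h3]

/-- Lemma 3.6(ii): if `s_k ≥ 0`, `s_k → 0`, `α > 1`, `β > 0`, and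
`s_k^α ≤ β (s_k - s_{k+1})` for all large `k`, then there is `ϱ > 0` with
`s_k ≤ ϱ k^{-1/(α-1)}` for all large `k`. -/
theorem stmt8 (s : ℕ → ℝ) (hs : ∀ k, 0 ≤ s k)
    (hlim : Tendsto s atTop (nhds 0))
    (α β : ℝ) (hα : 1 < α) (hβ : 0 < β)
    (hrec : ∀ᶠ k in atTop, s k ^ α ≤ β * (s k - s (k + 1))) :
    ∃ ϱ > (0 : ℝ), ∀ᶠ k in atTop, s k ≤ ϱ * (k : ℝ) ^ (-(1 / (α - 1))) := by
  rw [eventually_atTop] at hrec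
  obtain ⟨N, hN⟩ := hrec
  have hmono : ∀ k, N ≤ k → s (k + 1) ≤ s k := by
    intro k hk
    have h := hN k hk
    nlinarith [Real.rpow_nonneg (hs k) α]
  by_cases hzero : ∃ M, N ≤ M ∧ s M = 0
  · obtain ⟨M, hM, hM0⟩ := hzero
    have hz : ∀ k, M ≤ k → s k = 0 := by
      intro k hk
      induction k, hk using Nat.le_induction with
      | base => exact hM0
      | succ n hn ih =>
        have h := hN n (hM.trans hn)
        rw [ih] at h
        rw [Real.zero_rpow (by positivity)] at h
        have := hs (n + 1)
        nlinarith
    refine ⟨1, one_pos, ?_⟩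
    rw [eventually_atTop]
    exact ⟨M, fun k hk => by
      rw [hz k hk, one_mul]
      exact Real.rpow_nonneg (Nat.cast_nonneg k) _⟩
  · push_neg at hzero
    have hpos : ∀ k, N ≤ k → 0 < s k := fun k hk => (hs k).lt_of_ne fun h => hzero k hk h.symm
    set c := (α - 1) / β with hc_def
    have hc : 0 < c := div_pos (by linarith) hβ
    have hstep : ∀ k, N ≤ k → s k ^ (1 - α) + c ≤ s (k + 1) ^ (1 - α) := by
      intro k hk
      have hsk := hpos k hk
      have hsk1 := hpos (k + 1) (hk.trans (Nat.le_succ k))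
      have hrk := hN k hk
      have hkey := key_step hsk1 (hmono k hk) hα
      -- (α-1)*(s k - s (k+1)) / s k ^ α ≥ (α-1)/β = c
      have hsa : (0:ℝ) < s k ^ α := Real.rpow_pos_of_pos hsk _
      have h2 : c ≤ (α - 1) * (s k - s (k + 1)) / s k ^ α := by
        rw [hc_def, div_le_div_iff₀ hβ hsa]
        nlinarith
      linarith
    have hsum : ∀ k, N ≤ k → c * ((k : ℝ) - N) ≤ s k ^ (1 - α) := by
      intro k hk
      induction k, hk using Nat.le_induction with
      | base => simpa using Real.rpow_nonneg (hs N) (1 - α)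
      | succ n hn ih =>
        have := hstep n hn
        push_cast
        linarith
    refine ⟨(c / 2) ^ (-(1 / (α - 1))), Real.rpow_pos_of_pos (by positivity) _, ?_⟩
    rw [eventually_atTop]
    refine ⟨max (2 * N) 1, fun k hk => ?_⟩
    have hk2N : 2 * N ≤ k := le_of_max_le_left hk
    have hk1 : 1 ≤ k := le_of_max_le_right hk
    have hkN : N ≤ k := le_trans (Nat.le_mul_of_pos_left N two_pos) hk2N
    have hkR : (0:ℝ) < k := by exact_mod_cast hk1
    have hhalf : c * ((k : ℝ) / 2) ≤ s k ^ (1 - α) := by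
      have h1 := hsum k hkN
      have : (N : ℝ) ≤ (k : ℝ) / 2 := by
        have : (2 * N : ℕ) ≤ k := hk2N
        have : ((2 * N : ℕ) : ℝ) ≤ k := by exact_mod_cast this
        push_cast at this
        linarith
      nlinarith
    have hckpos : (0:ℝ) < c * ((k : ℝ) / 2) := by positivity
    have hskpos := hpos k hkN
    -- s k = (s k ^ (1-α)) ^ (-(1/(α-1)))
    have hexp : (1 - α) * (-(1 / (α - 1))) = 1 := by
      have hne : α - 1 ≠ 0 := by linarith
      field_simp
      ring
    have he : -(1 / (α - 1)) ≤ (0:ℝ) := by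
      have h0 : (0:ℝ) < 1 / (α - 1) := by
        apply div_pos one_pos; linarith
      linarith
    calc s k = (s k ^ (1 - α)) ^ (-(1 / (α - 1))) := by
          rw [← Real.rpow_mul (hs k), hexp, Real.rpow_one]
      _ ≤ (c * ((k : ℝ) / 2)) ^ (-(1 / (α - 1))) :=
          Real.rpow_le_rpow_of_nonpos hckpos hhalf he
      _ = (c / 2) ^ (-(1 / (α - 1))) * (k : ℝ) ^ (-(1 / (α - 1))) := by
          rw [show c * ((k : ℝ) / 2) = (c / 2) * k by ring,
            Real.mul_rpow (by positivity) hkR.le]
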